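/- Let u be a monotonic valuation on subsets of a finite set M. Call a bundle A 'too small' if A is not EF1 for u but M \ A is EF1 for u. If A is too small and j ∈ M \ A, then A ∪ {j} is not 'too large' (where B is too large if B is EF1 but M \ B is not). Consequently, the Hamming distance between any too-small bundle and any too-large bundle is at least 2. -/

import Mathlib

open Finset

/-- Bundle `A` is EF1 for valuation `u` (items `M`). -/
def EF1 {α : Type*} [DecidableEq α] (M : Finset α) (u : Finset α → ℝ) (A : Finset α) : Prop :=
  u (M \ A) ≤ u A ∨ ∃ j ∈ M \ A, u ((M \ A).erase j) ≤ u A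

/-- Bundle `A` is EFX for valuation `u` (items `M`). -/
def EFX {α : Type*} [DecidableEq α] (M : Finset α) (u : Finset α → ℝ) (A : Finset α) : Prop :=
  ∀ j ∈ M \ A, u ((M \ A).erase j) ≤ u A

/-- Bundle `A` is "too small": not EF1, but its complement is EF1. -/
def TooSmall {α : Type*} [DecidableEq α] (M : Finset α) (u : Finset α → ℝ) (A : Finset α) :
    Prop :=
  ¬ EF1 M u A ∧ EF1 M u (M \ A)

/-- Bundle `A` is "too large": EF1, but its complement is not EF1. -/
def TooLarge {α : Type*} [DecidableEq α] (M : Finset α) (u : Finset α → ℝ) (A : Finset α) :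
    Prop :=
  EF1 M u A ∧ ¬ EF1 M u (M \ A)

lemma not_EF1' {α : Type*} [DecidableEq α] {M : Finset α} {u : Finset α → ℝ} {A : Finset α}
    (h : ¬ EF1 M u A) :
    u A < u (M \ A) ∧ ∀ j ∈ M \ A, u A < u ((M \ A).erase j) := by
  unfold EF1 at h; push_neg at h; exact h

lemma small_add' {α : Type*} [DecidableEq α] {M A : Finset α} {u : Finset α → ℝ}
    (hA : A ⊆ M) {j : α} (hj : j ∈ M \ A) (hs : TooSmall M u A) :
    ¬ TooLarge M u (A ∪ {j}) := by
  rintro ⟨-, hC⟩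
  obtain ⟨hne, h2⟩ := not_EF1' hs.1
  apply hC
  right
  have hjM : j ∈ M := (mem_sdiff.mp hj).1
  have hjA : j ∉ A := (mem_sdiff.mp hj).2
  have hsub : A ∪ {j} ⊆ M := union_subset hA (by simpa)
  have hMM : M \ (M \ (A ∪ {j})) = A ∪ {j} := Finset.sdiff_sdiff_eq_self hsub
  refine ⟨j, ?_, ?_⟩
  · rw [hMM]; simp
  · rw [hMM]
    have h1 : (A ∪ {j}).erase j = A := by
      ext x
      simp only [mem_erase, mem_union, mem_singleton]
      constructor
      · rintro ⟨hx, hx2 | rfl⟩; exact hx2; exact absurd rfl hx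
      · intro hx; exact ⟨fun h => hjA (h ▸ hx), Or.inl hx⟩
    have hset : M \ (A ∪ {j}) = (M \ A).erase j := by
      ext x; simp only [mem_sdiff, mem_union, mem_singleton, mem_erase]; tauto
    rw [h1, hset]
    exact (h2 j hj).le

lemma small_erase {α : Type*} [DecidableEq α] {M A : Finset α} {u : Finset α → ℝ}
    (hum : ∀ A B : Finset α, A ⊆ B → u A ≤ u B)
    (hA : A ⊆ M) {j : α} (hj : j ∈ A) (hs : TooSmall M u A) :
    ¬ TooLarge M u (A.erase j) := by
  rintro ⟨hB, -⟩
  obtain ⟨hne, h2⟩ := not_EF1' hs.1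
  have hBA : A.erase j ⊆ A := erase_subset _ _
  have huB : u (A.erase j) ≤ u A := hum _ _ hBA
  have hMs : M \ A ⊆ M \ A.erase j := sdiff_subset_sdiff (Subset.refl M) hBA
  have hjM : j ∈ M := hA hj
  rcases hB with h | ⟨k, hk, hk2⟩
  · exact absurd ((hum _ _ hMs).trans (h.trans huB)) (not_le.mpr hne)
  · have hkM : k ∈ M := (mem_sdiff.mp hk).1
    by_cases hkj : k = j
    · subst hkj
      have : M \ A ⊆ (M \ A.erase k).erase k := by
        intro x hx
        exact mem_erase.mpr ⟨fun h => (mem_sdiff.mp hx).2 (h ▸ hj), hMs hx⟩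
      exact absurd ((hum _ _ this).trans (hk2.trans huB)) (not_le.mpr hne)
    · have hkA : k ∉ A := by
        intro hkA
        exact (mem_sdiff.mp hk).2 (mem_erase.mpr ⟨hkj, hkA⟩)
      have hkMA : k ∈ M \ A := mem_sdiff.mpr ⟨hkM, hkA⟩
      have hsub : (M \ A).erase k ⊆ (M \ A.erase j).erase k := erase_subset_erase _ hMs
      exact absurd ((hum _ _ hsub).trans (hk2.trans huB)) (not_le.mpr (h2 k hkMA))

theorem tooSmall_tooLarge_dist {α : Type*} [DecidableEq α] (M : Finset α)
    (u : Finset α → ℝ) (hu0 : u ∅ = 0)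
    (hum : ∀ A B : Finset α, A ⊆ B → u A ≤ u B) :
    (∀ A ⊆ M, ∀ j ∈ M \ A, TooSmall M u A → ¬ TooLarge M u (A ∪ {j})) ∧
      (∀ A ⊆ M, ∀ B ⊆ M, TooSmall M u A → TooLarge M u B →
        2 ≤ ((A \ B) ∪ (B \ A)).card) := by
  constructor
  · intro A hA j hj hS
    exact small_add' hA hj hS
  · intro A hA B hB hS hL
    by_contra hlt
    push_neg at hlt
    interval_cases h : ((A \ B) ∪ (B \ A)).card
    · -- card = 0 : A = B
      have hD : (A \ B) ∪ (B \ A) = ∅ := card_eq_zero.mp h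
      have hAB : A = B := by
        have h1 : A \ B = ∅ := subset_empty.mp (hD ▸ subset_union_left)
        have h2 : B \ A = ∅ := subset_empty.mp (hD ▸ subset_union_right)
        exact Subset.antisymm (sdiff_eq_empty_iff_subset.mp h1)
          (sdiff_eq_empty_iff_subset.mp h2)
      exact hS.1 (hAB ▸ hL.1)
    · -- card = 1
      obtain ⟨j, hD⟩ := card_eq_one.mp h
      by_cases hjB : j ∈ B
      · -- B = A ∪ {j}
        have hjA : j ∉ A := by
          intro hjA
          have : j ∈ B \ A ∨ j ∈ A \ B := by
            have := hD ▸ (mem_singleton_self j)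
            rcases mem_union.mp this with h' | h'
            · exact Or.inr h'
            · exact Or.inl h'
          rcases this with h' | h'
          · exact (mem_sdiff.mp h').2 hjA
          · exact (mem_sdiff.mp h').2 hjB
        have hBA : B = A ∪ {j} := by
          ext x
          simp only [mem_union, mem_singleton]
          constructor
          · intro hx
            by_cases hxA : x ∈ A
            · exact Or.inl hxA
            · have : x ∈ (A \ B) ∪ (B \ A) := mem_union_right _ (mem_sdiff.mpr ⟨hx, hxA⟩)
              exact Or.inr (mem_singleton.mp (hD ▸ this))
          · rintro (hx | rfl)
            · by_contra hxB
              have : x ∈ (A \ B) ∪ (B \ A) := mem_union_left _ (mem_sdiff.mpr ⟨hx, hxB⟩)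
              have := mem_singleton.mp (hD ▸ this)
              subst this
              exact hjA hx
            · exact hjB
        exact small_add' hA (mem_sdiff.mpr ⟨hB hjB, hjA⟩) hS (hBA ▸ hL)
      · -- j ∈ A, B = A.erase j
        have hjA : j ∈ A := by
          have := hD ▸ (mem_singleton_self j)
          rcases mem_union.mp this with h' | h'
          · exact (mem_sdiff.mp h').1
          · exact absurd (mem_sdiff.mp h').1 hjB
        have hBA : B = A.erase j := by
          ext x
          simp only [mem_erase]
          constructor
          · intro hx
            refine ⟨fun hxe => hjB (hxe ▸ hx), ?_⟩
            by_contra hxA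
            have : x ∈ (A \ B) ∪ (B \ A) := mem_union_right _ (mem_sdiff.mpr ⟨hx, hxA⟩)
            have := mem_singleton.mp (hD ▸ this)
            subst this
            exact hjB hx
          · rintro ⟨hxj, hxA⟩
            by_contra hxB
            have : x ∈ (A \ B) ∪ (B \ A) := mem_union_left _ (mem_sdiff.mpr ⟨hxA, hxB⟩)
            exact hxj (mem_singleton.mp (hD ▸ this))
        exact small_erase hum hA hjA hS (hBA ▸ hL)
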